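/- Let m ≥ 1, let Ω ⊆ ℝ^m be an open set, and let B ⊆ ℝ^m be the origin-centered ball with the same Gaussian volume as Ω, i.e. γ_m(B) = γ_m(Ω). If h : [0, ∞) → [0, ∞) is nondecreasing and bounded, then ∫_Ω h(|x|) dγ_m(x) ≥ ∫_B h(|x|) dγ_m(x). -/

import Mathlib

open MeasureTheory Real Set

noncomputable section

/-- The `m`-dimensional Gaussian measure `dγ_m = (2π)^{-m/2} e^{-|x|²/2} dx`. -/
def gaussianMeasure (m : ℕ) : Measure (EuclideanSpace ℝ (Fin m)) :=
  volume.withDensity fun x =>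
    ENNReal.ofReal ((2 * π) ^ (-(m : ℝ) / 2) * Real.exp (-‖x‖ ^ 2 / 2))

lemma gaussianMeasure_ball_lt_top (m : ℕ) (R : ℝ) :
    gaussianMeasure m (Metric.ball (0 : EuclideanSpace ℝ (Fin m)) R) < ⊤ := by
  set c : ℝ := (2 * π) ^ (-(m : ℝ) / 2)
  have hc : 0 ≤ c := Real.rpow_nonneg (by positivity) _
  have hle : gaussianMeasure m (Metric.ball (0 : EuclideanSpace ℝ (Fin m)) R)
      ≤ ENNReal.ofReal c * volume (Metric.ball (0 : EuclideanSpace ℝ (Fin m)) R) := by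
    rw [gaussianMeasure, withDensity_apply _ measurableSet_ball]
    calc ∫⁻ x in Metric.ball (0 : EuclideanSpace ℝ (Fin m)) R,
          ENNReal.ofReal (c * Real.exp (-‖x‖ ^ 2 / 2)) ∂volume
        ≤ ∫⁻ _ in Metric.ball (0 : EuclideanSpace ℝ (Fin m)) R,
          ENNReal.ofReal c ∂volume := by
          refine lintegral_mono fun x => ENNReal.ofReal_le_ofReal ?_
          nlinarith [Real.exp_le_one_iff.mpr (by nlinarith [sq_nonneg ‖x‖] : -‖x‖ ^ 2 / 2 ≤ 0), hc,
            Real.exp_pos (-‖x‖ ^ 2 / 2)]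
      _ = ENNReal.ofReal c * volume (Metric.ball (0 : EuclideanSpace ℝ (Fin m)) R) := by
          rw [lintegral_const, Measure.restrict_apply MeasurableSet.univ, univ_inter]
  exact lt_of_le_of_lt hle (ENNReal.mul_lt_top ENNReal.ofReal_lt_top measure_ball_lt_top)

/-- **Lemma 3.1 (reversed form).** Let `Ω ⊆ ℝ^m` be an open set and `B` the
origin-centered ball with the same Gaussian volume as `Ω`. If
`h : [0,∞) → [0,∞)` is nondecreasing and bounded, then
`∫_Ω h(|x|) dγ_m ≥ ∫_B h(|x|) dγ_m`. -/
theorem gaussian_symmetrization_monotone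
    (m : ℕ) (hm : 1 ≤ m)
    (Ω : Set (EuclideanSpace ℝ (Fin m))) (hΩ : IsOpen Ω)
    (R : ℝ) (hR : 0 ≤ R)
    (hvol : gaussianMeasure m (Metric.ball (0 : EuclideanSpace ℝ (Fin m)) R)
      = gaussianMeasure m Ω)
    (h : ℝ → ℝ)
    (hnonneg : ∀ r, 0 ≤ r → 0 ≤ h r)
    (hmono : MonotoneOn h (Ici (0 : ℝ)))
    (hbdd : ∃ C : ℝ, ∀ r, 0 ≤ r → h r ≤ C) :
    ∫ x in Ω, h ‖x‖ ∂gaussianMeasure m ≥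
      ∫ x in Metric.ball (0 : EuclideanSpace ℝ (Fin m)) R, h ‖x‖ ∂gaussianMeasure m := by
  classical
  obtain ⟨C, hC⟩ := hbdd
  set ν := gaussianMeasure m with hν
  set B := Metric.ball (0 : EuclideanSpace ℝ (Fin m)) R with hB
  set g : ℝ → ℝ := fun r => h (max r 0) with hg
  have hgmono : Monotone g := fun a b hab =>
    hmono (mem_Ici.mpr (le_max_right _ _)) (mem_Ici.mpr (le_max_right _ _)) (max_le_max hab le_rfl)
  set f : EuclideanSpace ℝ (Fin m) → ℝ := fun x => g ‖x‖ with hf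
  have hfg : ∀ x : EuclideanSpace ℝ (Fin m), h ‖x‖ = f x := by
    intro x; simp [hf, hg, max_eq_left (norm_nonneg x)]
  have hfmeas : Measurable f := hgmono.measurable.comp measurable_norm
  have hfbound : ∀ x, ‖f x‖ ≤ C := by
    intro x
    have h0 : (0:ℝ) ≤ max ‖x‖ 0 := le_max_right _ _
    rw [Real.norm_eq_abs, abs_of_nonneg (hnonneg _ h0)]
    exact hC _ h0
  have hBmeas : MeasurableSet B := measurableSet_ball
  have hΩmeas : MeasurableSet Ω := hΩ.measurableSet
  have hνB : ν B < ⊤ := gaussianMeasure_ball_lt_top m R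
  have hνΩ : ν Ω < ⊤ := hvol ▸ hνB
  -- integrability on any finite-measure set
  have hint : ∀ s : Set (EuclideanSpace ℝ (Fin m)), ν s ≠ ⊤ → IntegrableOn f s ν := by
    intro s hs
    exact Measure.integrableOn_of_bounded hs hfmeas.aestronglyMeasurable
      (Filter.Eventually.of_forall hfbound)
  have hintΩB : IntegrableOn f (Ω \ B) ν :=
    hint _ ((lt_of_le_of_lt (measure_mono diff_subset) hνΩ).ne)
  have hintBΩ : IntegrableOn f (B \ Ω) ν :=
    hint _ ((lt_of_le_of_lt (measure_mono diff_subset) hνB).ne)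
  have hintΩ : IntegrableOn f Ω ν := hint _ hνΩ.ne
  have hintB : IntegrableOn f B ν := hint _ hνB.ne
  -- measure equality of the two "symmetric difference" pieces
  have hinterfin : ν (Ω ∩ B) ≠ ⊤ :=
    (lt_of_le_of_lt (measure_mono inter_subset_left) hνΩ).ne
  have hmeq : ν (Ω \ B) = ν (B \ Ω) := by
    have h1 : ν (Ω ∩ B) + ν (Ω \ B) = ν Ω := measure_inter_add_diff Ω hBmeas
    have h2 : ν (B ∩ Ω) + ν (B \ Ω) = ν B := measure_inter_add_diff B hΩmeas
    rw [inter_comm] at h2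
    have := h1.trans (hvol.symm.trans h2.symm)
    exact (ENNReal.add_right_inj hinterfin).mp this
  -- split integrals
  have hsplitΩ : ∫ x in Ω, f x ∂ν = (∫ x in Ω ∩ B, f x ∂ν) + ∫ x in Ω \ B, f x ∂ν :=
    (integral_inter_add_diff hBmeas hintΩ).symm
  have hsplitB : ∫ x in B, f x ∂ν = (∫ x in Ω ∩ B, f x ∂ν) + ∫ x in B \ Ω, f x ∂ν := by
    rw [inter_comm]
    exact (integral_inter_add_diff hΩmeas hintB).symm
  -- the key comparison
  have hRfin : (ν (B \ Ω)).toReal = (ν (Ω \ B)).toReal := by rw [hmeq]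
  have hkey : ∫ x in B \ Ω, f x ∂ν ≤ ∫ x in Ω \ B, f x ∂ν := by
    have hle1 : ∫ x in B \ Ω, f x ∂ν ≤ (ν (B \ Ω)).toReal * h R := by
      have : ∫ x in B \ Ω, f x ∂ν ≤ ∫ _ in B \ Ω, h R ∂ν := by
        refine setIntegral_mono_on hintBΩ ((integrableOn_const_iff enorm_ne_top).mpr
          (Or.inr (lt_of_le_of_lt (measure_mono diff_subset) hνB)))
          (hBmeas.diff hΩmeas) ?_
        intro x hx
        have hxR : ‖x‖ ≤ R := le_of_lt (by simpa [hB, mem_ball_zero_iff] using hx.1)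
        simpa [hf, hg, max_eq_left (norm_nonneg x)] using
          hmono (norm_nonneg x) hR hxR
      simpa [smul_eq_mul, Measure.real] using this
    have hle2 : (ν (Ω \ B)).toReal * h R ≤ ∫ x in Ω \ B, f x ∂ν := by
      have : ∫ _ in Ω \ B, h R ∂ν ≤ ∫ x in Ω \ B, f x ∂ν := by
        refine setIntegral_mono_on ((integrableOn_const_iff enorm_ne_top).mpr
          (Or.inr (lt_of_le_of_lt (measure_mono diff_subset) hνΩ)))
          hintΩB (hΩmeas.diff hBmeas) ?_
        intro x hx
        have hxR : R ≤ ‖x‖ := by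
          have := hx.2
          simpa [hB, mem_ball_zero_iff, not_lt] using this
        simpa [hf, hg, max_eq_left (norm_nonneg x)] using
          hmono hR (norm_nonneg x) hxR
      simpa [smul_eq_mul, Measure.real] using this
    calc ∫ x in B \ Ω, f x ∂ν ≤ (ν (B \ Ω)).toReal * h R := hle1
      _ = (ν (Ω \ B)).toReal * h R := by rw [hmeq]
      _ ≤ ∫ x in Ω \ B, f x ∂ν := hle2
  have : ∫ x in B, f x ∂ν ≤ ∫ x in Ω, f x ∂ν := by
    rw [hsplitΩ, hsplitB]
    exact add_le_add le_rfl hkey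
  simpa only [ge_iff_le, hfg] using this
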